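/- arXiv:1509.08356 — 2 statements merged into one kernel-verified Lean document; each statement's English description precedes it below -/
import Mathlib

section
/- Let 1 ≤ p < ∞. For a ∈ (0,1) define f_a(z) = (1-a)^{1/p}/(1-az)^{2/p}. Then there is a constant C = C(p) such that for all s ∈ [0,1) and all θ with (1-a)^{1/(2(2+p))} ≤ |θ| ≤ π: (i) |f_a(s e^{iθ})|^p ≤ C (1-a)^{1 - 1/(2+p)}, and (ii) |f_a'(s e^{iθ})|^p ≤ C (1-a)^{1/2}. -/
open Complex Real

lemma key_lb {r θ : ℝ} (hr0 : 0 ≤ r) (hr1 : r ≤ 1) (hθ : |θ| ≤ π) :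
    |θ| ≤ 2 * π * ‖(1 - (r:ℂ) * Complex.exp (θ * Complex.I))‖ := by
  set w : ℂ := 1 - (r:ℂ) * Complex.exp (θ * Complex.I) with hw
  have hre : w.re = 1 - r * Real.cos θ := by
    simp [hw, Complex.exp_ofReal_mul_I_re, Complex.exp_ofReal_mul_I_im]
  have him : w.im = -(r * Real.sin θ) := by
    simp [hw, Complex.exp_ofReal_mul_I_re, Complex.exp_ofReal_mul_I_im]
  have hpi := Real.pi_pos
  have hre_le := Complex.abs_re_le_norm w
  have him_le := Complex.abs_im_le_norm w
  rcases le_or_gt (Real.cos θ) 0 with hc | hc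
  · have h1 : (1:ℝ) ≤ ‖w‖ := by
      have h2 : (1:ℝ) ≤ w.re := by nlinarith
      calc (1:ℝ) ≤ w.re := h2
        _ ≤ |w.re| := le_abs_self _
        _ ≤ _ := hre_le
    nlinarith
  · have hhalf : |θ| < π / 2 := by
      by_contra h
      push_neg at h
      have : Real.cos |θ| ≤ 0 :=
        Real.cos_nonpos_of_pi_div_two_le_of_le h (by linarith)
      rw [Real.cos_abs] at this
      linarith
    have habs : |Real.sin (|θ|)| = |Real.sin θ| := by
      rcases abs_cases θ with ⟨h1, _⟩ | ⟨h1, _⟩ <;> rw [h1] <;> simp [Real.sin_neg]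
    have hsin : 2/π * |θ| ≤ |Real.sin θ| := by
      calc 2/π * |θ| ≤ Real.sin (|θ|) := Real.mul_le_sin (abs_nonneg θ) hhalf.le
        _ ≤ |Real.sin (|θ|)| := le_abs_self _
        _ = |Real.sin θ| := habs
    rcases le_or_gt (1/2 : ℝ) r with hr | hr
    · have h1 : r * |Real.sin θ| ≤ ‖w‖ := by
        calc r * |Real.sin θ| = |w.im| := by rw [him, abs_neg, abs_mul, _root_.abs_of_nonneg hr0]
          _ ≤ _ := him_le
      have hsin' : |θ| ≤ π/2 * |Real.sin θ| := by
        rw [← div_le_iff₀' (by positivity : (0:ℝ) < π/2)]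
        calc |θ| / (π/2) = 2/π * |θ| := by field_simp
          _ ≤ _ := hsin
      linarith [mul_le_mul_of_nonneg_left
          (mul_le_mul_of_nonneg_right hr (abs_nonneg (Real.sin θ))) hpi.le,
        mul_le_mul_of_nonneg_left h1 hpi.le,
        mul_nonneg hpi.le (norm_nonneg w)]
    · have h1 : (1:ℝ) - r ≤ ‖w‖ := by
        have := norm_sub_norm_le (1:ℂ) ((r:ℂ) * Complex.exp (θ * Complex.I))
        simpa [Complex.norm_exp_ofReal_mul_I, _root_.abs_of_nonneg hr0] using this
      nlinarith

/-- Pointwise decay estimates for the test function `f_a(z) = (1-a)^{1/p}/(1-az)^{2/p}`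
and its derivative away from the arc `I(a)`: for `(1-a)^{1/(2(2+p))} ≤ |θ| ≤ π`,
`|f_a(se^{iθ})|^p ≤ C (1-a)^{1-1/(2+p)}` and `|f_a'(se^{iθ})|^p ≤ C (1-a)^{1/2}`. -/
theorem test_function_decay (p : ℝ) (hp : 1 ≤ p) :
    ∃ C > (0:ℝ), ∀ a ∈ Set.Ioo (0:ℝ) 1, ∀ s ∈ Set.Ico (0:ℝ) 1, ∀ θ : ℝ,
      (1 - a) ^ (1 / (2 * (2 + p))) ≤ |θ| → |θ| ≤ π →
      ‖((1 - (a:ℂ)) ^ ((1:ℂ)/(p:ℂ))) /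
          ((1 - (a:ℂ) * ((s:ℂ) * Complex.exp (θ * Complex.I))) ^ ((2:ℂ)/(p:ℂ)))‖ ^ p ≤
        C * (1 - a) ^ (1 - 1/(2+p)) ∧
      ‖(2*(a:ℂ)/(p:ℂ)) * ((1 - (a:ℂ)) ^ ((1:ℂ)/(p:ℂ))) *
          ((1 - (a:ℂ) * ((s:ℂ) * Complex.exp (θ * Complex.I))) ^ (-(2:ℂ)/(p:ℂ) - 1))‖ ^ p ≤
        C * (1 - a) ^ ((1:ℝ)/2) := by
  have hp0 : (0:ℝ) < p := lt_of_lt_of_le one_pos hp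
  have hpi := Real.pi_pos
  refine ⟨4*π^2 + 2^p * (2*π)^((2:ℝ)+p), by positivity, ?_⟩
  rintro a ⟨ha0, ha1⟩ s ⟨hs0, hs1⟩ θ hθ1 hθ2
  set δ := 1 - a with hδdef
  have hδ0 : 0 < δ := by simp only [hδdef]; linarith
  set w : ℂ := 1 - (a:ℂ) * ((s:ℂ) * Complex.exp (θ * Complex.I)) with hw
  set R := ‖w‖ with hRdef
  have hlb : |θ| ≤ 2 * π * R := by
    have hcast : w = 1 - ((a*s : ℝ):ℂ) * Complex.exp (θ * Complex.I) := by
      push_cast; ring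
    rw [hRdef, hcast]
    exact key_lb (by positivity) (by nlinarith) hθ2
  have hθpos : 0 < |θ| := lt_of_lt_of_le (Real.rpow_pos_of_pos hδ0 _) hθ1
  have hR0 : 0 < R := by nlinarith
  -- key power bounds
  have hbase : δ ^ (1 / (2*(2+p))) ≤ 2*π*R := le_trans hθ1 hlb
  have h2p : (0:ℝ) < 2 + p := by linarith
  have hsq : δ ^ (1/(2+p)) ≤ (2*π)^(2:ℝ) * R^(2:ℝ) := by
    calc δ ^ (1/(2+p)) = (δ ^ (1/(2*(2+p)))) ^ (2:ℝ) := by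
          rw [← Real.rpow_mul hδ0.le]
          congr 1
          field_simp
      _ ≤ (2*π*R) ^ (2:ℝ) :=
          Real.rpow_le_rpow (Real.rpow_nonneg hδ0.le _) hbase (by norm_num)
      _ = (2*π)^(2:ℝ) * R^(2:ℝ) := Real.mul_rpow (by positivity) hR0.le
  have hsqrt : δ ^ ((1:ℝ)/2) ≤ (2*π)^((2:ℝ)+p) * R^((2:ℝ)+p) := by
    calc δ ^ ((1:ℝ)/2) = (δ ^ (1/(2*(2+p)))) ^ ((2:ℝ)+p) := by
          rw [← Real.rpow_mul hδ0.le]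
          congr 1
          field_simp
      _ ≤ (2*π*R) ^ ((2:ℝ)+p) :=
          Real.rpow_le_rpow (Real.rpow_nonneg hδ0.le _) hbase h2p.le
      _ = (2*π)^((2:ℝ)+p) * R^((2:ℝ)+p) := Real.mul_rpow (by positivity) hR0.le
  have hcast1 : (1 - (a:ℂ)) = ((δ:ℝ):ℂ) := by push_cast [hδdef]; ring
  constructor
  · -- first estimate
    have hn1 : ‖((1 - (a:ℂ)) ^ ((1:ℂ)/(p:ℂ))) / (w ^ ((2:ℂ)/(p:ℂ)))‖
        = δ ^ (1/p) / R ^ (2/p) := by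
      rw [norm_div]
      congr 1
      · rw [hcast1, Complex.norm_cpow_eq_rpow_re_of_pos hδ0]
        norm_num
      · have h : ((2:ℂ)/(p:ℂ)) = (((2/p : ℝ)):ℂ) := by push_cast; ring
        rw [h, Complex.norm_cpow_real]
    rw [hn1, Real.div_rpow (Real.rpow_nonneg hδ0.le _) (Real.rpow_nonneg hR0.le _),
      ← Real.rpow_mul hδ0.le, ← Real.rpow_mul hR0.le,
      one_div_mul_cancel hp0.ne', div_mul_cancel₀ _ hp0.ne', Real.rpow_one]
    -- δ / R^2 ≤ C * δ^(1-1/(2+p))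
    rw [div_le_iff₀ (Real.rpow_pos_of_pos hR0 _)]
    have key : δ = δ ^ (1 - 1/(2+p)) * δ ^ (1/(2+p)) := by
      rw [← Real.rpow_add hδ0]; norm_num
    calc δ = δ ^ (1 - 1/(2+p)) * δ ^ (1/(2+p)) := key
      _ ≤ δ ^ (1 - 1/(2+p)) * ((2*π)^(2:ℝ) * R^(2:ℝ)) :=
          mul_le_mul_of_nonneg_left hsq (Real.rpow_nonneg hδ0.le _)
      _ ≤ (4*π^2 + 2^p * (2*π)^((2:ℝ)+p)) * δ ^ (1 - 1/(2+p)) * R^(2:ℝ) := by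
          have h1 : (2*π)^(2:ℝ) = 4*π^2 := by
            rw [show ((2:ℝ)) = ((2:ℕ):ℝ) by norm_num, Real.rpow_natCast]; ring
          have h2 : (0:ℝ) ≤ 2^p * (2*π)^((2:ℝ)+p) := by positivity
          have h3 : (0:ℝ) ≤ δ ^ (1 - 1/(2+p)) := Real.rpow_nonneg hδ0.le _
          have h4 : (0:ℝ) ≤ R^(2:ℝ) := Real.rpow_nonneg hR0.le _
          rw [h1]
          nlinarith [mul_nonneg (mul_nonneg h2 h3) h4]
  · -- second estimate
    have hn2 : ‖(2*(a:ℂ)/(p:ℂ)) * ((1 - (a:ℂ)) ^ ((1:ℂ)/(p:ℂ))) * (w ^ (-(2:ℂ)/(p:ℂ) - 1))‖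
        = (2*a/p) * (δ ^ (1/p)) * R ^ (-2/p - 1) := by
      rw [norm_mul, norm_mul]
      congr 1
      · congr 1
        · have h : (2*(a:ℂ)/(p:ℂ)) = (((2*a/p : ℝ)):ℂ) := by push_cast; ring
          rw [h, Complex.norm_real, Real.norm_eq_abs, abs_of_pos (by positivity)]
        · rw [hcast1, Complex.norm_cpow_eq_rpow_re_of_pos hδ0]
          norm_num
      · have h : (-(2:ℂ)/(p:ℂ) - 1) = (((-2/p - 1 : ℝ)):ℂ) := by push_cast; ring
        rw [h, Complex.norm_cpow_real]
    rw [hn2, Real.mul_rpow (by positivity) (Real.rpow_nonneg hR0.le _),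
      Real.mul_rpow (by positivity) (Real.rpow_nonneg hδ0.le _),
      ← Real.rpow_mul hδ0.le, ← Real.rpow_mul hR0.le, one_div_mul_cancel hp0.ne',
      Real.rpow_one]
    have hexp : (-2/p - 1) * p = -(2 + p) := by field_simp; ring
    rw [hexp]
    -- (2a/p)^p * δ * R^(-(2+p)) ≤ C * δ^(1/2)
    have hbound1 : (2*a/p) ^ p ≤ 2 ^ p := by
      apply Real.rpow_le_rpow (by positivity) _ hp0.le
      rw [div_le_iff₀ hp0]
      nlinarith
    have hRneg : R ^ (-(2+p)) = (R ^ ((2:ℝ)+p))⁻¹ := by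
      rw [← Real.rpow_neg hR0.le]
    have hδR : δ * R ^ (-(2+p)) ≤ (2*π)^((2:ℝ)+p) * δ ^ ((1:ℝ)/2) := by
      rw [hRneg, mul_inv_le_iff₀ (Real.rpow_pos_of_pos hR0 _)]
      calc δ = δ ^ ((1:ℝ)/2) * δ ^ ((1:ℝ)/2) := by
            rw [← Real.rpow_add hδ0]; norm_num
        _ ≤ δ ^ ((1:ℝ)/2) * ((2*π)^((2:ℝ)+p) * R^((2:ℝ)+p)) :=
            mul_le_mul_of_nonneg_left hsqrt (Real.rpow_nonneg hδ0.le _)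
        _ = (2*π)^((2:ℝ)+p) * δ ^ ((1:ℝ)/2) * R^((2:ℝ)+p) := by ring
    have h2p0 : (0:ℝ) ≤ (2:ℝ)^p := by positivity
    calc (2*a/p) ^ p * δ * R ^ (-(2+p))
        = (2*a/p) ^ p * (δ * R ^ (-(2+p))) := by ring
      _ ≤ 2 ^ p * ((2*π)^((2:ℝ)+p) * δ ^ ((1:ℝ)/2)) := by
          apply mul_le_mul hbound1 hδR
          · positivity
          · positivity
      _ ≤ (4*π^2 + 2^p * (2*π)^((2:ℝ)+p)) * δ ^ ((1:ℝ)/2) := by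
          have h3 : (0:ℝ) ≤ δ ^ ((1:ℝ)/2) := Real.rpow_nonneg hδ0.le _
          nlinarith [mul_nonneg (le_of_lt (by positivity : (0:ℝ) < 4*π^2)) h3]
end

section
/- Every strictly singular bounded linear operator T : ℓ^p → ℓ^p, 1 ≤ p < ∞, is compact. -/
open Metric Filter Finset
open scoped ENNReal Topology

namespace SSLP

variable {q : ℝ≥0∞} [Fact (1 ≤ q)]
set_option linter.unusedSectionVars false

local notation "X" => lp (fun _ : ℕ => ℂ) q

noncomputable def trunc (q : ℝ≥0∞) (s : Finset ℕ) (f : lp (fun _ : ℕ => ℂ) q) :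
    lp (fun _ : ℕ => ℂ) q :=
  ∑ i ∈ s, lp.single q i (f i)

lemma q_pos : (0:ℝ≥0∞) < q := lt_of_lt_of_le zero_lt_one Fact.out

lemma pt_pos (hq : q ≠ ∞) : 0 < q.toReal := ENNReal.toReal_pos (q_pos).ne' hq

lemma trunc_apply (s : Finset ℕ) (f : X) (i : ℕ) :
    trunc q s f i = if i ∈ s then f i else 0 := by
  classical
  have h := lp.coeFn_sum (fun j => lp.single q j (f j)) s
  show (⇑(∑ j ∈ s, lp.single q j (f j))) i = _
  rw [h, Finset.sum_apply]
  simp [lp.single_apply, Pi.single_apply]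

lemma norm_trunc_rpow (hq : q ≠ ∞) (s : Finset ℕ) (f : X) :
    ‖trunc q s f‖ ^ q.toReal = ∑ i ∈ s, ‖f i‖ ^ q.toReal :=
  lp.norm_sum_single (pt_pos hq) _ s

lemma norm_sub_trunc_rpow (hq : q ≠ ∞) (s : Finset ℕ) (f : X) :
    ‖f - trunc q s f‖ ^ q.toReal = ‖f‖ ^ q.toReal - ∑ i ∈ s, ‖f i‖ ^ q.toReal :=
  lp.norm_compl_sum_single (pt_pos hq) f s


lemma norm_add_rpow_of_disj (hq : q ≠ ∞) (f g : X) (h : ∀ i, f i = 0 ∨ g i = 0) :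
    ‖f + g‖ ^ q.toReal = ‖f‖ ^ q.toReal + ‖g‖ ^ q.toReal := by
  have hpt := pt_pos (q := q) hq
  rw [lp.norm_rpow_eq_tsum hpt, lp.norm_rpow_eq_tsum hpt, lp.norm_rpow_eq_tsum hpt,
    ← Summable.tsum_add ((lp.memℓp f).summable hpt) ((lp.memℓp g).summable hpt)]
  congr 1; funext i
  rcases h i with h0 | h0 <;>
    simp [lp.coeFn_add, h0, Real.zero_rpow hpt.ne']

lemma sum_coord (s : Finset ℕ) (g : ℕ → X) (i : ℕ) :
    (∑ k ∈ s, g k) i = ∑ k ∈ s, g k i := by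
  rw [lp.coeFn_sum]; simp

lemma norm_blocksum_rpow (hq : q ≠ ∞) (M : ℕ → ℕ) (hM : Monotone M)
    (b : ℕ → X) (hb : ∀ k i, b k i ≠ 0 → M k ≤ i ∧ i < M (k + 1))
    (a : ℕ → ℂ) (K : ℕ) :
    ‖∑ k ∈ Finset.range K, a k • b k‖ ^ q.toReal
      = ∑ k ∈ Finset.range K, ‖a k‖ ^ q.toReal * ‖b k‖ ^ q.toReal := by
  induction K with
  | zero => simp [Real.zero_rpow (pt_pos hq).ne']
  | succ K ih =>
    rw [Finset.sum_range_succ, Finset.sum_range_succ, ← ih,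
      norm_add_rpow_of_disj hq _ _ ?_]
    · congr 1
      rw [lp.norm_const_smul (q_pos.ne' : q ≠ 0) (b K),
        Real.mul_rpow (norm_nonneg _) (norm_nonneg _)]
    · intro i
      by_cases hi : M K ≤ i
      · left
        rw [sum_coord]
        refine Finset.sum_eq_zero fun k hk => ?_
        have hbk : b k i = 0 := by
          by_contra h0
          exact absurd (lt_of_lt_of_le (hb k i h0).2
            (hM (Nat.succ_le_of_lt (Finset.mem_range.mp hk)))) (not_lt.mpr hi)
        simp [lp.coeFn_smul, hbk]
      · right
        have hbk : b K i = 0 := by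
          by_contra h0
          exact hi (hb K i h0).1
        simp [lp.coeFn_smul, hbk]


lemma coeff_le_A {pt : ℝ} (hpt : 0 < pt) (a : ℕ → ℂ) {K k : ℕ} (hk : k ∈ Finset.range K) :
    ‖a k‖ ≤ (∑ j ∈ Finset.range K, ‖a j‖ ^ pt) ^ pt⁻¹ := by
  have h1 : ‖a k‖ ^ pt ≤ ∑ j ∈ Finset.range K, ‖a j‖ ^ pt :=
    Finset.single_le_sum (fun j _ => Real.rpow_nonneg (norm_nonneg _) _) hk
  calc ‖a k‖ = (‖a k‖ ^ pt) ^ pt⁻¹ := (Real.rpow_rpow_inv (norm_nonneg _) hpt.ne').symm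
    _ ≤ _ := Real.rpow_le_rpow (Real.rpow_nonneg (norm_nonneg _) _) h1 (inv_nonneg.2 hpt.le)

lemma norm_blocksum_le (hq : q ≠ ∞) (M : ℕ → ℕ) (hM : Monotone M)
    (b : ℕ → X) (hb : ∀ k i, b k i ≠ 0 → M k ≤ i ∧ i < M (k + 1))
    (a : ℕ → ℂ) (K : ℕ) {C : ℝ} (hC : 0 ≤ C) (h : ∀ k ∈ Finset.range K, ‖b k‖ ≤ C) :
    ‖∑ k ∈ Finset.range K, a k • b k‖
      ≤ C * (∑ j ∈ Finset.range K, ‖a j‖ ^ q.toReal) ^ q.toReal⁻¹ := by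
  have hpt := pt_pos (q := q) hq
  set S := ∑ j ∈ Finset.range K, ‖a j‖ ^ q.toReal with hSdef
  have hS : 0 ≤ S := Finset.sum_nonneg fun j _ => Real.rpow_nonneg (norm_nonneg _) _
  have key : ‖∑ k ∈ Finset.range K, a k • b k‖ ^ q.toReal ≤ (C * S ^ q.toReal⁻¹) ^ q.toReal := by
    rw [norm_blocksum_rpow hq M hM b hb a K,
      Real.mul_rpow hC (Real.rpow_nonneg hS _), Real.rpow_inv_rpow hS hpt.ne']
    rw [hSdef, Finset.mul_sum]
    refine Finset.sum_le_sum fun k hk => ?_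
    have h1 : ‖b k‖ ^ q.toReal ≤ C ^ q.toReal :=
      Real.rpow_le_rpow (norm_nonneg _) (h k hk) hpt.le
    nlinarith [Real.rpow_nonneg (norm_nonneg (a k)) q.toReal,
      Real.rpow_nonneg (norm_nonneg (b k)) q.toReal]
  exact (Real.rpow_le_rpow_iff (norm_nonneg _)
    (mul_nonneg hC (Real.rpow_nonneg hS _)) hpt).mp key

lemma le_norm_blocksum (hq : q ≠ ∞) (M : ℕ → ℕ) (hM : Monotone M)
    (b : ℕ → X) (hb : ∀ k i, b k i ≠ 0 → M k ≤ i ∧ i < M (k + 1))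
    (a : ℕ → ℂ) (K : ℕ) {c : ℝ} (hc : 0 ≤ c) (h : ∀ k ∈ Finset.range K, c ≤ ‖b k‖) :
    c * (∑ j ∈ Finset.range K, ‖a j‖ ^ q.toReal) ^ q.toReal⁻¹
      ≤ ‖∑ k ∈ Finset.range K, a k • b k‖ := by
  have hpt := pt_pos (q := q) hq
  set S := ∑ j ∈ Finset.range K, ‖a j‖ ^ q.toReal with hSdef
  have hS : 0 ≤ S := Finset.sum_nonneg fun j _ => Real.rpow_nonneg (norm_nonneg _) _
  have key : (c * S ^ q.toReal⁻¹) ^ q.toReal ≤ ‖∑ k ∈ Finset.range K, a k • b k‖ ^ q.toReal := by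
    rw [norm_blocksum_rpow hq M hM b hb a K,
      Real.mul_rpow hc (Real.rpow_nonneg hS _), Real.rpow_inv_rpow hS hpt.ne']
    rw [hSdef, Finset.mul_sum]
    refine Finset.sum_le_sum fun k hk => ?_
    have h1 : c ^ q.toReal ≤ ‖b k‖ ^ q.toReal :=
      Real.rpow_le_rpow hc (h k hk) hpt.le
    nlinarith [Real.rpow_nonneg (norm_nonneg (a k)) q.toReal,
      Real.rpow_nonneg hc q.toReal]
  exact (Real.rpow_le_rpow_iff (mul_nonneg hc (Real.rpow_nonneg hS _))
    (norm_nonneg _) hpt).mp key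

lemma norm_sum_smul_sub (v b : ℕ → X) (a : ℕ → ℂ) (δ : ℕ → ℝ)
    (h : ∀ k, ‖v k - b k‖ ≤ δ k) (K : ℕ) :
    ‖(∑ k ∈ Finset.range K, a k • v k) - ∑ k ∈ Finset.range K, a k • b k‖
      ≤ ∑ k ∈ Finset.range K, ‖a k‖ * δ k := by
  rw [← Finset.sum_sub_distrib]
  refine (norm_sum_le _ _).trans (Finset.sum_le_sum fun k _ => ?_)
  rw [← smul_sub]
  calc ‖a k • (v k - b k)‖ = ‖a k‖ * ‖v k - b k‖ := norm_smul _ _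
    _ ≤ ‖a k‖ * δ k := mul_le_mul_of_nonneg_left (h k) (norm_nonneg _)


lemma step (hq : q ≠ ∞) (w y : ℕ → X)
    (hw : ∀ i, Tendsto (fun n => w n i) atTop (𝓝 (0:ℂ)))
    (hy : ∀ i, Tendsto (fun n => y n i) atTop (𝓝 (0:ℂ)))
    (N m : ℕ) {δ : ℝ} (hδ : 0 < δ) :
    ∃ n M, N < n ∧ m < M ∧ ‖w n - trunc q (Finset.Ico m M) (w n)‖ ≤ δ ∧
      ‖y n - trunc q (Finset.Ico m M) (y n)‖ ≤ δ := by
  have hpt := pt_pos (q := q) hq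
  have hδp : 0 < δ ^ q.toReal / 2 := by positivity
  have hrpow0 : ∀ (z : ℕ → X) (i : ℕ), Tendsto (fun n => z n i) atTop (𝓝 (0:ℂ)) →
      Tendsto (fun n => ‖z n i‖ ^ q.toReal) atTop (𝓝 0) := by
    intro z i hz
    have h1 : Tendsto (fun n => ‖z n i‖) atTop (𝓝 0) := by
      simpa using hz.norm
    have h2 : ContinuousAt (fun x : ℝ => x ^ q.toReal) 0 :=
      Real.continuousAt_rpow_const 0 _ (Or.inr hpt.le)
    have := h2.tendsto.comp h1
    simpa [Function.comp_def, Real.zero_rpow hpt.ne'] using this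
  have hhead : Tendsto
      (fun n => ∑ i ∈ Finset.range m, (‖w n i‖ ^ q.toReal + ‖y n i‖ ^ q.toReal))
      atTop (𝓝 0) := by
    have := tendsto_finset_sum (Finset.range m)
      (fun i _ => (hrpow0 (fun n => w n) i (hw i)).add (hrpow0 (fun n => y n) i (hy i)))
    simpa using this
  obtain ⟨n, hn, hnN⟩ :=
    ((hhead.eventually (gt_mem_nhds hδp)).and (eventually_gt_atTop N)).exists
  have hw' := (lp.hasSum_norm hpt (w n)).tendsto_sum_nat
  have hy' := (lp.hasSum_norm hpt (y n)).tendsto_sum_nat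
  have hev1 : ∀ᶠ M in atTop, ‖w n‖ ^ q.toReal - δ ^ q.toReal / 2
      < ∑ i ∈ Finset.range M, ‖w n i‖ ^ q.toReal :=
    hw'.eventually (lt_mem_nhds (by linarith))
  have hev2 : ∀ᶠ M in atTop, ‖y n‖ ^ q.toReal - δ ^ q.toReal / 2
      < ∑ i ∈ Finset.range M, ‖y n i‖ ^ q.toReal :=
    hy'.eventually (lt_mem_nhds (by linarith))
  obtain ⟨M, hM1, hM2, hMm⟩ := (hev1.and (hev2.and (eventually_gt_atTop m))).exists
  have key : ∀ f : X, (∑ i ∈ Finset.range m, ‖f i‖ ^ q.toReal) < δ ^ q.toReal / 2 →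
      (‖f‖ ^ q.toReal - δ ^ q.toReal / 2 < ∑ i ∈ Finset.range M, ‖f i‖ ^ q.toReal) →
      ‖f - trunc q (Finset.Ico m M) f‖ ≤ δ := by
    intro f h1 h2
    have e := norm_sub_trunc_rpow hq (Finset.Ico m M) f
    rw [Finset.sum_Ico_eq_sub _ hMm.le] at e
    have : ‖f - trunc q (Finset.Ico m M) f‖ ^ q.toReal ≤ δ ^ q.toReal := by
      rw [e]; linarith
    exact (Real.rpow_le_rpow_iff (norm_nonneg _) hδ.le hpt).mp this
  refine ⟨n, M, hnN, hMm, key _ ?_ hM1, key _ ?_ hM2⟩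
  · refine lt_of_le_of_lt (Finset.sum_le_sum fun i _ => ?_) hn
    nlinarith [Real.rpow_nonneg (norm_nonneg (y n i)) q.toReal]
  · refine lt_of_le_of_lt (Finset.sum_le_sum fun i _ => ?_) hn
    nlinarith [Real.rpow_nonneg (norm_nonneg (w n i)) q.toReal]


lemma hump (hq : q ≠ ∞) (w y : ℕ → X)
    (hw : ∀ i, Tendsto (fun n => w n i) atTop (𝓝 (0:ℂ)))
    (hy : ∀ i, Tendsto (fun n => y n i) atTop (𝓝 (0:ℂ)))
    (δ : ℕ → ℝ) (hδ : ∀ k, 0 < δ k) :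
    ∃ n M : ℕ → ℕ, StrictMono n ∧ Monotone M ∧
      (∀ k, ‖w (n k) - trunc q (Finset.Ico (M k) (M (k+1))) (w (n k))‖ ≤ δ k) ∧
      (∀ k, ‖y (n k) - trunc q (Finset.Ico (M k) (M (k+1))) (y (n k))‖ ≤ δ k) := by
  have hstep : ∀ k N m : ℕ, ∃ nM : ℕ × ℕ, N < nM.1 ∧ m < nM.2 ∧
      ‖w nM.1 - trunc q (Finset.Ico m nM.2) (w nM.1)‖ ≤ δ k ∧
      ‖y nM.1 - trunc q (Finset.Ico m nM.2) (y nM.1)‖ ≤ δ k := by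
    intro k N m
    obtain ⟨n, M, h1, h2, h3, h4⟩ := step hq w y hw hy N m (hδ k)
    exact ⟨(n, M), h1, h2, h3, h4⟩
  choose f hf1 hf2 hf3 hf4 using hstep
  set H : ℕ → ℕ × ℕ := fun k => Nat.rec (f 0 0 0) (fun k prev => f (k+1) prev.1 prev.2) k
    with hH
  have hHsucc : ∀ k, H (k+1) = f (k+1) (H k).1 (H k).2 := fun k => rfl
  set n : ℕ → ℕ := fun k => (H k).1 with hn
  set M : ℕ → ℕ := fun k => Nat.rec 0 (fun j _ => (H j).2) k with hM
  have hM0 : M 0 = 0 := rfl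
  have hMsucc : ∀ k, M (k+1) = (H k).2 := fun k => rfl
  refine ⟨n, M, strictMono_nat_of_lt_succ fun k => ?_, monotone_nat_of_le_succ fun k => ?_,
    fun k => ?_, fun k => ?_⟩
  · exact hf1 (k+1) (H k).1 (H k).2
  · cases k with
    | zero => exact (hf2 0 0 0).le
    | succ j => exact (hf2 (j+1) (H j).1 (H j).2).le
  · cases k with
    | zero => exact hf3 0 0 0
    | succ j => exact hf3 (j+1) (H j).1 (H j).2
  · cases k with
    | zero => exact hf4 0 0 0
    | succ j => exact hf4 (j+1) (H j).1 (H j).2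


lemma exists_sep {Y : Type*} [NormedAddCommGroup Y] [NormedSpace ℂ Y] [CompleteSpace Y]
    (T : Y →L[ℂ] Y) (h : ¬ IsCompactOperator (⇑T)) :
    ∃ ε > (0:ℝ), ∃ u : ℕ → Y, (∀ k, ‖u k‖ ≤ 1) ∧
      ∀ j k, j < k → ε ≤ ‖T (u k) - T (u j)‖ := by
  have h1 : ¬ TotallyBounded (⇑T '' closedBall 0 1) := by
    intro htb
    exact h ((isCompactOperator_iff_exists_mem_nhds_image_subset_compact (⇑T)).mpr
      ⟨closedBall 0 1, closedBall_mem_nhds _ one_pos,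
        closure (⇑T '' closedBall 0 1),
        TotallyBounded.isCompact_of_isClosed htb.closure isClosed_closure,
        subset_closure⟩)
  rw [Metric.totallyBounded_iff] at h1
  push_neg at h1
  obtain ⟨ε, hε, hcov⟩ := h1
  have hkey : ∀ s : Finset Y, (∀ x ∈ s, ‖x‖ ≤ 1) → ∃ y, ‖y‖ ≤ 1 ∧
      ∀ x ∈ s, ε ≤ ‖T y - T x‖ := by
    intro s hs
    have := hcov (⇑T '' (s : Set Y)) ((s : Set Y).toFinite.image _)
    rw [Set.not_subset] at this
    obtain ⟨z, hz1, hz2⟩ := this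
    obtain ⟨x, hx1, rfl⟩ := hz1
    refine ⟨x, by simpa [dist_eq_norm] using hx1, fun y hy => ?_⟩
    by_contra hlt
    push_neg at hlt
    exact hz2 (Set.mem_biUnion (Set.mem_image_of_mem _ (by exact_mod_cast hy))
      (by simpa [Metric.mem_ball, dist_eq_norm] using hlt))
  obtain ⟨u, hu, husep⟩ := exists_seq_of_forall_finset_exists
    (fun x : Y => ‖x‖ ≤ 1) (fun x y => ε ≤ ‖T y - T x‖) hkey
  exact ⟨ε, hε, u, hu, fun j k hjk => husep j k hjk⟩

lemma ptwise {R : ℝ} (g : ℕ → ℕ → ℂ) (hg : ∀ n j, ‖g n j‖ ≤ R) :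
    ∃ (φ : ℕ → ℕ) (L : ℕ → ℂ), StrictMono φ ∧
      ∀ j, Tendsto (fun k => g (φ k) j) atTop (𝓝 (L j)) := by
  have hcomp : IsCompact (Set.univ.pi fun _ : ℕ => closedBall (0:ℂ) R) :=
    isCompact_univ_pi fun _ => isCompact_closedBall 0 R
  have hmem : ∀ n, g n ∈ Set.univ.pi fun _ : ℕ => closedBall (0:ℂ) R := by
    intro n
    intro j _
    simpa [dist_eq_norm] using hg n j
  obtain ⟨L, _, φ, hφ, hconv⟩ := hcomp.tendsto_subseq hmem
  exact ⟨φ, L, hφ, fun j => (tendsto_pi_nhds.mp hconv) j⟩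

end SSLP

def StrictlySingular {X : Type*} [NormedAddCommGroup X] [NormedSpace ℂ X]
    (T : X →L[ℂ] X) : Prop :=
  ∀ N : Submodule ℂ X, IsClosed (N : Set X) → ¬ FiniteDimensional ℂ N →
    ∀ η > (0:ℝ), ∃ x ∈ N, ‖x‖ = 1 ∧ ‖T x‖ < η

set_option maxHeartbeats 1000000 in
/-- Every strictly singular bounded operator on `ℓ^p`, `1 ≤ p < ∞`, is compact. -/
theorem strictly_singular_on_lp_is_compact (p : ℝ) (hp : 1 ≤ p)
    [Fact (1 ≤ ENNReal.ofReal p)]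
    (T : lp (fun _ : ℕ => ℂ) (ENNReal.ofReal p) →L[ℂ] lp (fun _ : ℕ => ℂ) (ENNReal.ofReal p))
    (hT : StrictlySingular T) : IsCompactOperator T := by
  classical
  by_contra hc
  set q : ℝ≥0∞ := ENNReal.ofReal p with hqdef
  have hq : q ≠ ∞ := ENNReal.ofReal_ne_top
  have hptR : q.toReal = p := ENNReal.toReal_ofReal (by linarith)
  have hpt : 0 < q.toReal := by rw [hptR]; linarith
  -- Step 1: a separated sequence in the image of the unit ball
  obtain ⟨ε, hε, u, hu, husep⟩ := SSLP.exists_sep T hc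
  -- Step 2: extract pointwise convergent subsequences for both u and T ∘ u
  obtain ⟨φ1, Lu, hφ1, hconv1⟩ := SSLP.ptwise (R := 1) (fun n j => u n j)
    (fun n j => (lp.norm_apply_le_norm (SSLP.q_pos (q := q)).ne' (u n) j).trans (hu n))
  obtain ⟨φ2, Lt, hφ2, hconv2⟩ := SSLP.ptwise (R := ‖T‖) (fun k j => T (u (φ1 k)) j)
    (fun k j => (lp.norm_apply_le_norm (SSLP.q_pos (q := q)).ne' (T (u (φ1 k))) j).trans
      (by calc ‖T (u (φ1 k))‖ ≤ ‖T‖ * ‖u (φ1 k)‖ := T.le_opNorm _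
            _ ≤ ‖T‖ * 1 := mul_le_mul_of_nonneg_left (hu _) (norm_nonneg T)
            _ = ‖T‖ := mul_one _))
  set ψ : ℕ → ℕ := fun k => φ1 (φ2 k) with hψdef
  have hψ : StrictMono ψ := fun a b hab => hφ1 (hφ2 hab)
  have hconvU : ∀ j, Tendsto (fun k => u (ψ k) j) atTop (𝓝 (Lu j)) :=
    fun j => (hconv1 j).comp hφ2.tendsto_atTop
  have hconvT : ∀ j, Tendsto (fun k => T (u (ψ k)) j) atTop (𝓝 (Lt j)) :=
    fun j => hconv2 j
  -- Step 3: differences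
  set w : ℕ → lp (fun _ : ℕ => ℂ) q := fun k => u (ψ (2*k)) - u (ψ (2*k+1)) with hwdef
  set y : ℕ → lp (fun _ : ℕ => ℂ) q := fun k => T (w k) with hydef
  have h2k : Tendsto (fun k : ℕ => 2*k) atTop atTop :=
    StrictMono.tendsto_atTop (fun a b hab => by omega)
  have h2k1 : Tendsto (fun k : ℕ => 2*k+1) atTop atTop :=
    StrictMono.tendsto_atTop (fun a b hab => by omega)
  have hwle : ∀ k, ‖w k‖ ≤ 2 := by
    intro k
    calc ‖w k‖ ≤ ‖u (ψ (2*k))‖ + ‖u (ψ (2*k+1))‖ := norm_sub_le _ _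
      _ ≤ 2 := by linarith [hu (ψ (2*k)), hu (ψ (2*k+1))]
  have hTw : ∀ k, ε ≤ ‖T (w k)‖ := by
    intro k
    have h1 := husep (ψ (2*k)) (ψ (2*k+1)) (hψ (by omega))
    have h2 : T (w k) = T (u (ψ (2*k))) - T (u (ψ (2*k+1))) := map_sub T _ _
    rw [h2, norm_sub_rev]
    exact h1
  have hw0 : ∀ j, Tendsto (fun k => w k j) atTop (𝓝 (0:ℂ)) := by
    intro j
    have h1 : Tendsto (fun k => u (ψ (2*k)) j - u (ψ (2*k+1)) j) atTop (𝓝 (Lu j - Lu j)) :=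
      ((hconvU j).comp h2k).sub ((hconvU j).comp h2k1)
    rw [sub_self] at h1
    exact h1.congr (fun k => by rw [hwdef]; rw [lp.coeFn_sub]; simp)
  have hy0 : ∀ j, Tendsto (fun k => y k j) atTop (𝓝 (0:ℂ)) := by
    intro j
    have h1 : Tendsto (fun k => T (u (ψ (2*k))) j - T (u (ψ (2*k+1))) j) atTop
        (𝓝 (Lt j - Lt j)) :=
      ((hconvT j).comp h2k).sub ((hconvT j).comp h2k1)
    rw [sub_self] at h1
    refine h1.congr (fun k => ?_)
    have h3 : y k = T (u (ψ (2*k))) - T (u (ψ (2*k+1))) := by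
      rw [hydef]; exact map_sub T _ _
    rw [h3, lp.coeFn_sub]
    simp
  -- Step 4: gliding hump
  set δ0 : ℝ := min (1/2) (ε/8) with hδ0def
  have hδ0 : 0 < δ0 := lt_min (by norm_num) (by linarith)
  have hδ0a : δ0 ≤ 1/2 := min_le_left _ _
  have hδ0b : δ0 ≤ ε/8 := min_le_right _ _
  set δ : ℕ → ℝ := fun k => δ0 * (1/2)^k with hδdef
  have hδpos : ∀ k, 0 < δ k := fun k => by positivity
  have hδle : ∀ k, δ k ≤ δ0 := by
    intro k
    have h : ((1:ℝ)/2)^k ≤ 1 := pow_le_one₀ (by norm_num) (by norm_num)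
    calc δ k = δ0 * (1/2)^k := rfl
      _ ≤ δ0 * 1 := mul_le_mul_of_nonneg_left h hδ0.le
      _ = δ0 := mul_one _
  have hsumδ : ∀ K, ∑ k ∈ Finset.range K, δ k ≤ 2*δ0 := by
    intro K
    have h : ∑ k ∈ Finset.range K, δ k = δ0 * ∑ k ∈ Finset.range K, ((1:ℝ)/2)^k := by
      rw [Finset.mul_sum]
    rw [h]
    calc δ0 * ∑ k ∈ Finset.range K, ((1:ℝ)/2)^k ≤ δ0 * 2 :=
          mul_le_mul_of_nonneg_left (sum_geometric_two_le K) hδ0.le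
      _ = 2*δ0 := mul_comm _ _
  obtain ⟨n, M, hnmono, hMmono, herrw, herry⟩ := SSLP.hump hq w y hw0 hy0 δ hδpos
  set v : ℕ → lp (fun _ : ℕ => ℂ) q := fun k => w (n k) with hvdef
  set bb : ℕ → lp (fun _ : ℕ => ℂ) q :=
    fun k => SSLP.trunc q (Finset.Ico (M k) (M (k+1))) (v k) with hbbdef
  set cc : ℕ → lp (fun _ : ℕ => ℂ) q :=
    fun k => SSLP.trunc q (Finset.Ico (M k) (M (k+1))) (T (v k)) with hccdef
  have hbsupp : ∀ k i, bb k i ≠ 0 → M k ≤ i ∧ i < M (k+1) := by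
    intro k i hne
    by_contra hcon
    exact hne (by rw [hbbdef, SSLP.trunc_apply,
      if_neg (by simpa [Finset.mem_Ico] using hcon)])
  have hcsupp : ∀ k i, cc k i ≠ 0 → M k ≤ i ∧ i < M (k+1) := by
    intro k i hne
    by_contra hcon
    exact hne (by rw [hccdef, SSLP.trunc_apply,
      if_neg (by simpa [Finset.mem_Ico] using hcon)])
  have hverr : ∀ k, ‖v k - bb k‖ ≤ δ k := fun k => herrw k
  have hTerr : ∀ k, ‖T (v k) - cc k‖ ≤ δ k := fun k => herry k
  have hvle : ∀ k, ‖v k‖ ≤ 2 := fun k => hwle (n k)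
  have hTv : ∀ k, ε ≤ ‖T (v k)‖ := fun k => hTw (n k)
  have hbC : ∀ k, ‖bb k‖ ≤ 3 := by
    intro k
    have h0 : bb k = v k - (v k - bb k) := by abel
    calc ‖bb k‖ = ‖v k - (v k - bb k)‖ := by rw [← h0]
      _ ≤ ‖v k‖ + ‖v k - bb k‖ := norm_sub_le _ _
      _ ≤ 3 := by linarith [hvle k, hverr k, hδle k, hδ0a]
  have hcc : ∀ k, ε/2 ≤ ‖cc k‖ := by
    intro k
    have h1 := norm_sub_norm_le (T (v k)) (cc k)
    linarith [hTerr k, hTv k, hδle k, hδ0b]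
  -- Core estimate on finite linear combinations
  have hcore : ∀ (a : ℕ → ℂ) (K : ℕ),
      ‖∑ k ∈ Finset.range K, a k • v k‖
          ≤ 4 * (∑ j ∈ Finset.range K, ‖a j‖ ^ q.toReal) ^ q.toReal⁻¹ ∧
      (ε/4) * (∑ j ∈ Finset.range K, ‖a j‖ ^ q.toReal) ^ q.toReal⁻¹
          ≤ ‖T (∑ k ∈ Finset.range K, a k • v k)‖ := by
    intro a K
    set A : ℝ := (∑ j ∈ Finset.range K, ‖a j‖ ^ q.toReal) ^ q.toReal⁻¹ with hAdef
    have hA0 : 0 ≤ A := Real.rpow_nonneg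
      (Finset.sum_nonneg fun j _ => Real.rpow_nonneg (norm_nonneg _) _) _
    have h1 : ‖∑ k ∈ Finset.range K, a k • bb k‖ ≤ 3 * A :=
      SSLP.norm_blocksum_le hq M hMmono bb hbsupp a K (by norm_num) (fun k _ => hbC k)
    have h2 : (ε/2) * A ≤ ‖∑ k ∈ Finset.range K, a k • cc k‖ :=
      SSLP.le_norm_blocksum hq M hMmono cc hcsupp a K (by linarith) (fun k _ => hcc k)
    have hΔ : ∑ k ∈ Finset.range K, ‖a k‖ * δ k ≤ A * (2*δ0) := by
      calc ∑ k ∈ Finset.range K, ‖a k‖ * δ k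
          ≤ ∑ k ∈ Finset.range K, A * δ k := Finset.sum_le_sum fun k hk =>
            mul_le_mul_of_nonneg_right (SSLP.coeff_le_A hpt a hk) (hδpos k).le
        _ = A * ∑ k ∈ Finset.range K, δ k := by rw [Finset.mul_sum]
        _ ≤ A * (2*δ0) := mul_le_mul_of_nonneg_left (hsumδ K) hA0
    have h3 : ‖(∑ k ∈ Finset.range K, a k • v k) - ∑ k ∈ Finset.range K, a k • bb k‖
        ≤ A * (2*δ0) := (SSLP.norm_sum_smul_sub v bb a δ hverr K).trans hΔ
    have h4 : T (∑ k ∈ Finset.range K, a k • v k)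
        = ∑ k ∈ Finset.range K, a k • T (v k) := by
      rw [map_sum]
      exact Finset.sum_congr rfl fun k _ => T.map_smul _ _
    have h5 : ‖T (∑ k ∈ Finset.range K, a k • v k) - ∑ k ∈ Finset.range K, a k • cc k‖
        ≤ A * (2*δ0) := by
      rw [h4]
      exact (SSLP.norm_sum_smul_sub (fun k => T (v k)) cc a δ hTerr K).trans hΔ
    have h7 : A * (2*δ0) ≤ A * 1 :=
      mul_le_mul_of_nonneg_left (by linarith) hA0
    have h8 : A * (2*δ0) ≤ A * (ε/4) :=
      mul_le_mul_of_nonneg_left (by linarith) hA0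
    constructor
    · have h6 := norm_sub_norm_le (∑ k ∈ Finset.range K, a k • v k)
        (∑ k ∈ Finset.range K, a k • bb k)
      linarith
    · have h6 := norm_sub_norm_le (∑ k ∈ Finset.range K, a k • cc k)
        (T (∑ k ∈ Finset.range K, a k • v k))
      rw [norm_sub_rev] at h6
      have h9 : A * (ε/4) = (ε/4) * A := mul_comm _ _
      have h10 : (ε/2) * A - (ε/4) * A = (ε/4) * A := by ring
      linarith
  -- the span estimate
  have hspan : ∀ x ∈ Submodule.span ℂ (Set.range v), (ε/16) * ‖x‖ ≤ ‖T x‖ := by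
    intro x hx
    obtain ⟨cf, rfl⟩ := Finsupp.mem_span_range_iff_exists_finsupp.mp hx
    set K := (cf.support.sup id) + 1 with hKdef
    have hsub : cf.support ⊆ Finset.range K := fun k hk =>
      Finset.mem_range.mpr (Nat.lt_succ_of_le (Finset.le_sup (f := id) hk))
    have hx' : (cf.sum fun k aa => aa • v k) = ∑ k ∈ Finset.range K, cf k • v k :=
      Finsupp.sum_of_support_subset cf hsub _ (fun i _ => zero_smul ℂ (v i))
    rw [hx']
    obtain ⟨hle, hge⟩ := hcore (fun k => cf k) K
    have hmul := mul_le_mul_of_nonneg_left hle (by linarith : (0:ℝ) ≤ ε/16)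
    have heq : (ε/16) * (4 * (∑ j ∈ Finset.range K, ‖cf j‖ ^ q.toReal) ^ q.toReal⁻¹)
        = (ε/4) * (∑ j ∈ Finset.range K, ‖cf j‖ ^ q.toReal) ^ q.toReal⁻¹ := by ring
    linarith
  -- linear independence
  have hlin : LinearIndependent ℂ v := by
    rw [linearIndependent_iff']
    intro s g hsum i his
    set K := (s.sup id) + 1 with hKdef
    set a : ℕ → ℂ := fun k => if k ∈ s then g k else 0 with hadef
    have hsub : s ⊆ Finset.range K := fun k hk =>
      Finset.mem_range.mpr (Nat.lt_succ_of_le (Finset.le_sup (f := id) hk))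
    have hzero : ∑ k ∈ Finset.range K, a k • v k = 0 := by
      calc ∑ k ∈ Finset.range K, a k • v k = ∑ k ∈ s, a k • v k :=
            (Finset.sum_subset hsub (fun x _ hx => by simp [hadef, hx])).symm
        _ = ∑ k ∈ s, g k • v k := Finset.sum_congr rfl (fun x hx => by simp [hadef, hx])
        _ = 0 := hsum
    have h2 := (hcore a K).2
    rw [hzero] at h2
    simp only [map_zero, norm_zero] at h2
    have hS0 : 0 ≤ ∑ j ∈ Finset.range K, ‖a j‖ ^ q.toReal :=
      Finset.sum_nonneg fun j _ => Real.rpow_nonneg (norm_nonneg _) _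
    have hA0 : 0 ≤ (∑ j ∈ Finset.range K, ‖a j‖ ^ q.toReal) ^ q.toReal⁻¹ :=
      Real.rpow_nonneg hS0 _
    have hA : (∑ j ∈ Finset.range K, ‖a j‖ ^ q.toReal) ^ q.toReal⁻¹ = 0 := by nlinarith
    have hSzero : ∑ j ∈ Finset.range K, ‖a j‖ ^ q.toReal = 0 := by
      have h := Real.rpow_inv_rpow hS0 hpt.ne'
      rw [hA, Real.zero_rpow hpt.ne'] at h
      exact h.symm
    have hterm : ‖a i‖ ^ q.toReal = 0 :=
      (Finset.sum_eq_zero_iff_of_nonneg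
        (fun j _ => Real.rpow_nonneg (norm_nonneg (a j)) q.toReal)).mp hSzero i (hsub his)
    have hai : a i = 0 := by
      by_contra hne
      exact absurd hterm
        (ne_of_gt (Real.rpow_pos_of_pos (norm_pos_iff.mpr hne) _))
    simpa [hadef, his] using hai
  -- the closed subspace
  set N : Submodule ℂ (lp (fun _ : ℕ => ℂ) q) :=
    (Submodule.span ℂ (Set.range v)).topologicalClosure with hNdef
  have hNclosed : IsClosed (N : Set (lp (fun _ : ℕ => ℂ) q)) :=
    Submodule.isClosed_topologicalClosure _
  have hNest : ∀ x ∈ N, (ε/16) * ‖x‖ ≤ ‖T x‖ := by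
    have hSclosed : IsClosed {x : lp (fun _ : ℕ => ℂ) q | (ε/16) * ‖x‖ ≤ ‖T x‖} :=
      isClosed_le (continuous_const.mul continuous_norm) (T.continuous.norm)
    intro x hx
    have hsubset : (Submodule.span ℂ (Set.range v) : Set (lp (fun _ : ℕ => ℂ) q))
        ⊆ {x | (ε/16) * ‖x‖ ≤ ‖T x‖} := fun z hz => hspan z hz
    have := closure_minimal hsubset hSclosed
    rw [hNdef] at hx
    rw [Submodule.topologicalClosure_coe] at *
    exact this hx
  have hNfd : ¬ FiniteDimensional ℂ N := by
    intro hfd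
    have hmem : ∀ k, v k ∈ N := fun k =>
      Submodule.le_topologicalClosure _ (Submodule.subset_span (Set.mem_range_self k))
    have hlin' : LinearIndependent ℂ (fun k => (⟨v k, hmem k⟩ : N)) := by
      apply LinearIndependent.of_comp N.subtype
      exact hlin
    exact Module.Finite.not_linearIndependent_of_infinite (ι := ℕ) (v := fun k => (⟨v k, hmem k⟩ : N)) hlin'
  obtain ⟨x, hxN, hx1, hxlt⟩ := hT N hNclosed hNfd (ε/16) (by linarith)
  have hfin := hNest x hxN
  rw [hx1, mul_one] at hfin
  linarith
end
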